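/- arXiv:1708.02332 — 6 statements merged into one kernel-verified Lean document; each statement's English description precedes it below -/
import Mathlib

section
/- Let n ≥ 3 and let F be a finite set of pairs (i,j) with 1 ≤ i < j ≤ n. Then the Lie subalgebra Lie({Ω_{ij} : (i,j) ∈ F}) equals so(n) if and only if there exists a subset S ⊆ F and an enumeration (i₁,j₁),…,(i_r,j_r) of the elements of S (each element of S listed exactly once) such that the product of transpositions (i_r,j_r)⋯(i₁,j₁) in the symmetric group S_n is an n-cycle, i.e., a cycle whose nontrivial orbit is all of {1,…,n}. -/
open Matrix

attribute [local instance 100] LieRing.ofAssociativeRing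

/-- `Ω i j = E i j - E j i` where `E i j` is the standard basis matrix. -/
noncomputable def Omega (n : ℕ) (i j : Fin n) : Matrix (Fin n) (Fin n) ℝ :=
  Matrix.single i j 1 - Matrix.single j i 1

/-- The smallest Lie subalgebra (linear subspace closed under the commutator)
of the `n × n` real matrices containing a set `S`. -/
noncomputable def lieGen (n : ℕ) (S : Set (Matrix (Fin n) (Fin n) ℝ)) :
    LieSubalgebra ℝ (Matrix (Fin n) (Fin n) ℝ) :=
  LieSubalgebra.lieSpan ℝ (Matrix (Fin n) (Fin n) ℝ) S

namespace CtrlAux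

open Equiv Equiv.Perm

variable {n : ℕ}

/-- The edge relation of the graph `F`. -/
def Rel (F : Finset (Fin n × Fin n)) (i j : Fin n) : Prop := (i, j) ∈ F ∨ (j, i) ∈ F

/-- Connectivity of the graph `F` on all of `Fin n`. -/
def Conn (F : Finset (Fin n × Fin n)) : Prop := ∀ i j : Fin n, Relation.EqvGen (Rel F) i j

lemma omega_swap (i j : Fin n) : Omega n j i = -Omega n i j := by
  unfold Omega; rw [neg_sub]

lemma omega_self (i : Fin n) : Omega n i i = 0 := sub_self _

lemma omega_transpose (i j : Fin n) : (Omega n i j)ᵀ = -(Omega n i j) := by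
  ext a b
  simp only [Omega, Matrix.transpose_apply, Matrix.sub_apply, Matrix.neg_apply,
    Matrix.single, Matrix.of_apply]
  by_cases h1 : i = a <;> by_cases h2 : j = b <;> by_cases h3 : i = b <;> by_cases h4 : j = a <;>
    simp [h1, h2, h3, h4, and_comm]

lemma omega_entry_zero {i j a b : Fin n} (h : ¬(i = a ∧ j = b)) (h' : ¬(j = a ∧ i = b)) :
    Omega n i j a b = 0 := by
  simp only [Omega, Matrix.sub_apply, Matrix.single, Matrix.of_apply,
    if_neg h, if_neg h', sub_zero]

lemma lie_omega {i j k : Fin n} (hij : i ≠ j) (hjk : j ≠ k) (hik : i ≠ k) :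
    ⁅Omega n i j, Omega n j k⁆ = Omega n i k := by
  simp only [Omega, Ring.lie_def, sub_mul, mul_sub]
  simp only [Matrix.single_mul_single_same, one_mul]
  rw [Matrix.single_mul_single_of_ne (h := hjk), Matrix.single_mul_single_of_ne (h := hij),
    Matrix.single_mul_single_of_ne (h := hik), Matrix.single_mul_single_of_ne (h := hik.symm),
    Matrix.single_mul_single_of_ne (h := hjk.symm), Matrix.single_mul_single_of_ne (h := hij.symm)]
  abel

section Skew

/-- The Lie algebra of skew-symmetric matrices. -/
noncomputable def skewAlg (n : ℕ) : LieSubalgebra ℝ (Matrix (Fin n) (Fin n) ℝ) where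
  carrier := {M | Mᵀ = -M}
  add_mem' := by
    intro a b ha hb
    simp only [Set.mem_setOf_eq] at *
    rw [Matrix.transpose_add, ha, hb, neg_add]
  zero_mem' := by simp
  smul_mem' := by
    intro c x hx
    simp only [Set.mem_setOf_eq] at *
    rw [Matrix.transpose_smul, hx, smul_neg]
  lie_mem' := by
    intro x y hx hy
    simp only [Set.mem_setOf_eq] at *
    rw [Ring.lie_def, Matrix.transpose_sub, Matrix.transpose_mul, Matrix.transpose_mul,
      hx, hy, neg_mul_neg, neg_mul_neg, neg_sub]

lemma omega_mem_of_eqvGen (F : Finset (Fin n × Fin n)) {i j : Fin n}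
    (h : Relation.EqvGen (Rel F) i j) :
    Omega n i j ∈ lieGen n {M | ∃ p ∈ F, M = Omega n p.1 p.2} := by
  induction h with
  | rel x y hxy =>
    rcases hxy with h | h
    · exact LieSubalgebra.subset_lieSpan ⟨(x, y), h, rfl⟩
    · rw [show Omega n x y = -Omega n y x from (omega_swap y x)]
      exact neg_mem (LieSubalgebra.subset_lieSpan ⟨(y, x), h, rfl⟩)
  | refl x => rw [omega_self]; exact zero_mem _
  | symm x y h ih => rw [omega_swap]; exact neg_mem ih
  | trans x y z h1 h2 ih1 ih2 =>
    by_cases hxy : x = y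
    · subst hxy; exact ih2
    by_cases hyz : y = z
    · subst hyz; exact ih1
    by_cases hxz : x = z
    · subst hxz; rw [omega_self]; exact zero_mem _
    · rw [← lie_omega hxy hyz hxz]
      exact LieSubalgebra.lie_mem _ ih1 ih2

lemma sum_omega (M : Matrix (Fin n) (Fin n) ℝ) :
    ∑ i, ∑ j, M i j • Omega n i j = M - Mᵀ := by
  have h1 : ∑ i, ∑ j, M i j • Matrix.single i j (1 : ℝ) = M := by
    conv_rhs => rw [matrix_eq_sum_single M]
    simp [Matrix.smul_single]
  have h2 : ∑ i, ∑ j, M i j • Matrix.single j i (1 : ℝ) = Mᵀ := by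
    rw [Finset.sum_comm]
    conv_rhs => rw [matrix_eq_sum_single Mᵀ]
    simp [Matrix.smul_single, Matrix.transpose_apply]
  calc ∑ i, ∑ j, M i j • Omega n i j
      = ∑ i, ∑ j, (M i j • Matrix.single i j (1:ℝ)
          - M i j • Matrix.single j i (1:ℝ)) := by
        simp only [Omega, smul_sub]
    _ = (∑ i, ∑ j, M i j • Matrix.single i j (1:ℝ))
          - ∑ i, ∑ j, M i j • Matrix.single j i (1:ℝ) := by
        simp only [Finset.sum_sub_distrib]
    _ = M - Mᵀ := by rw [h1, h2]

lemma eq_skew_of_conn (F : Finset (Fin n × Fin n)) (hc : Conn F) :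
    (lieGen n {M | ∃ p ∈ F, M = Omega n p.1 p.2} : Set (Matrix (Fin n) (Fin n) ℝ))
      = {M | Mᵀ = -M} := by
  apply Set.Subset.antisymm
  · have hle : lieGen n {M | ∃ p ∈ F, M = Omega n p.1 p.2} ≤ skewAlg n := by
      rw [lieGen, LieSubalgebra.lieSpan_le]
      rintro M ⟨p, hp, rfl⟩
      exact omega_transpose p.1 p.2
    intro M hM
    exact hle hM
  · intro M hM
    have hM' : Mᵀ = -M := hM
    have hΩ : ∀ i j : Fin n, Omega n i j ∈ lieGen n {M | ∃ p ∈ F, M = Omega n p.1 p.2} :=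
      fun i j => omega_mem_of_eqvGen F (hc i j)
    have key : M = (2⁻¹ : ℝ) • ∑ i, ∑ j, M i j • Omega n i j := by
      rw [sum_omega, hM', sub_neg_eq_add, ← two_smul ℝ M, smul_smul]
      norm_num
    show M ∈ lieGen n {M | ∃ p ∈ F, M = Omega n p.1 p.2}
    rw [key]
    refine Submodule.smul_mem (lieGen n _).toSubmodule _ ?_
    refine Submodule.sum_mem _ fun i _ => Submodule.sum_mem _ fun j _ => ?_
    exact Submodule.smul_mem _ _ (hΩ i j)

/-- The block Lie subalgebra associated to a subset `A` of indices. -/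
noncomputable def blockAlg (A : Set (Fin n)) : LieSubalgebra ℝ (Matrix (Fin n) (Fin n) ℝ) where
  carrier := {M | ∀ i j, i ∈ A → j ∉ A → M i j = 0 ∧ M j i = 0}
  add_mem' := by
    intro a b ha hb i j hi hj
    exact ⟨by rw [Matrix.add_apply, (ha i j hi hj).1, (hb i j hi hj).1, add_zero],
      by rw [Matrix.add_apply, (ha i j hi hj).2, (hb i j hi hj).2, add_zero]⟩
  zero_mem' := by intro i j _ _; simp
  smul_mem' := by
    intro c x hx i j hi hj
    exact ⟨by rw [Matrix.smul_apply, (hx i j hi hj).1, smul_zero],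
      by rw [Matrix.smul_apply, (hx i j hi hj).2, smul_zero]⟩
  lie_mem' := by
    intro x y hx hy i j hi hj
    have hmul : ∀ M N : Matrix (Fin n) (Fin n) ℝ,
        (∀ i j, i ∈ A → j ∉ A → M i j = 0 ∧ M j i = 0) →
        (∀ i j, i ∈ A → j ∉ A → N i j = 0 ∧ N j i = 0) →
        (M * N) i j = 0 ∧ (M * N) j i = 0 := by
      intro M N hM hN
      constructor
      · rw [Matrix.mul_apply]
        refine Finset.sum_eq_zero fun k _ => ?_
        by_cases hk : k ∈ A
        · rw [(hN k j hk hj).1, mul_zero]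
        · rw [(hM i k hi hk).1, zero_mul]
      · rw [Matrix.mul_apply]
        refine Finset.sum_eq_zero fun k _ => ?_
        by_cases hk : k ∈ A
        · rw [(hM k j hk hj).2, zero_mul]
        · rw [(hN i k hi hk).2, mul_zero]
    have h1 := hmul x y hx hy
    have h2 := hmul y x hy hx
    rw [Ring.lie_def]
    exact ⟨by rw [Matrix.sub_apply, h1.1, h2.1, sub_zero],
      by rw [Matrix.sub_apply, h1.2, h2.2, sub_zero]⟩

lemma conn_of_eq_skew (F : Finset (Fin n × Fin n))
    (h : (lieGen n {M | ∃ p ∈ F, M = Omega n p.1 p.2} : Set (Matrix (Fin n) (Fin n) ℝ))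
      = {M | Mᵀ = -M}) : Conn F := by
  by_contra hc
  simp only [Conn, not_forall] at hc
  obtain ⟨i0, j0, hij⟩ := hc
  set A : Set (Fin n) := {x | Relation.EqvGen (Rel F) i0 x} with hA_def
  have hA : ∀ x y, Rel F x y → (x ∈ A ↔ y ∈ A) := by
    intro x y hxy
    exact ⟨fun hx => hx.trans _ _ _ (Relation.EqvGen.rel _ _ hxy),
      fun hy => hy.trans _ _ _ (Relation.EqvGen.symm _ _ (Relation.EqvGen.rel _ _ hxy))⟩
  have hgen : lieGen n {M | ∃ p ∈ F, M = Omega n p.1 p.2} ≤ blockAlg A := by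
    rw [lieGen, LieSubalgebra.lieSpan_le]
    rintro M ⟨p, hp, rfl⟩
    intro i j hi hj
    have hpe : p.1 ∈ A ↔ p.2 ∈ A := hA _ _ (Or.inl (by simpa using hp))
    constructor
    · refine omega_entry_zero ?_ ?_
      · rintro ⟨rfl, rfl⟩; exact hj (hpe.mp hi)
      · rintro ⟨rfl, rfl⟩; exact hj (hpe.mpr hi)
    · refine omega_entry_zero ?_ ?_
      · rintro ⟨rfl, rfl⟩; exact hj (hpe.mpr hi)
      · rintro ⟨rfl, rfl⟩; exact hj (hpe.mp hi)
  have hΩmem : Omega n i0 j0 ∈ lieGen n {M | ∃ p ∈ F, M = Omega n p.1 p.2} := by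
    have : Omega n i0 j0 ∈ ({M | Mᵀ = -M} : Set (Matrix (Fin n) (Fin n) ℝ)) :=
      omega_transpose i0 j0
    rw [← h] at this
    exact this
  have hne : i0 ≠ j0 := fun e => hij (e ▸ Relation.EqvGen.refl i0)
  have h0 := (hgen hΩmem) i0 j0 (Relation.EqvGen.refl i0) hij
  have h1 : Omega n i0 j0 i0 j0 = 1 := by
    simp [Omega, Matrix.single, hne.symm]
  rw [h0.1] at h1
  exact zero_ne_one h1

end Skew

section Cycle

lemma eqvGen_apply (F : Finset (Fin n × Fin n)) (l : List (Fin n × Fin n))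
    (hl : ∀ p ∈ l, p ∈ F) (x : Fin n) :
    Relation.EqvGen (Rel F) x (((l.map fun p => Equiv.swap p.1 p.2).prod) x) := by
  induction l with
  | nil => simpa using Relation.EqvGen.refl x
  | cons p t ih =>
    simp only [List.map_cons, List.prod_cons, Equiv.Perm.mul_apply]
    have h1 := ih (fun q hq => hl q (List.mem_cons_of_mem p hq))
    refine h1.trans _ _ _ ?_
    set y := ((t.map fun p => Equiv.swap p.1 p.2).prod) x with hy
    have hpF : p ∈ F := hl p (List.mem_cons_self)
    by_cases hy1 : y = p.1
    · rw [hy1, Equiv.swap_apply_left]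
      exact Relation.EqvGen.rel _ _ (Or.inl (by simpa using hpF))
    by_cases hy2 : y = p.2
    · rw [hy2, Equiv.swap_apply_right]
      exact Relation.EqvGen.rel _ _ (Or.inr (by simpa using hpF))
    · rw [Equiv.swap_apply_of_ne_of_ne hy1 hy2]
      exact Relation.EqvGen.refl _

lemma conn_of_cycle (F : Finset (Fin n × Fin n)) (l : List (Fin n × Fin n))
    (hl : ∀ p ∈ l, p ∈ F)
    (hcyc : ((l.map fun p => Equiv.swap p.1 p.2).prod).IsCycle)
    (hsup : ((l.map fun p => Equiv.swap p.1 p.2).prod).support = Finset.univ) :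
    Conn F := by
  intro a b
  set σ := (l.map fun p => Equiv.swap p.1 p.2).prod with hσ
  have ha : σ a ≠ a := Equiv.Perm.mem_support.mp (hsup ▸ Finset.mem_univ a)
  have hb : σ b ≠ b := Equiv.Perm.mem_support.mp (hsup ▸ Finset.mem_univ b)
  obtain ⟨k, hk⟩ := hcyc.exists_pow_eq ha hb
  have key : ∀ m : ℕ, Relation.EqvGen (Rel F) a ((σ ^ m) a) := by
    intro m
    induction m with
    | zero => simpa using Relation.EqvGen.refl a
    | succ m ih =>
      rw [pow_succ', Equiv.Perm.mul_apply]
      exact ih.trans _ _ _ (eqvGen_apply F l hl ((σ ^ m) a))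
  exact hk ▸ key k

lemma isCycle_swap_mul {σ : Equiv.Perm (Fin n)} (hσ : σ.IsCycle) {a b : Fin n}
    (ha : a ∈ σ.support) (hb : b ∉ σ.support) :
    (Equiv.swap a b * σ).IsCycle ∧ (Equiv.swap a b * σ).support = insert b σ.support := by
  classical
  set τ := Equiv.swap a b * σ with hτ
  have hab : a ≠ b := fun h => hb (h ▸ ha)
  have hσb : σ b = b := Equiv.Perm.notMem_support.mp hb
  have hτb : τ b = a := by
    rw [hτ, Equiv.Perm.mul_apply, hσb, Equiv.swap_apply_right]
  have hτx : ∀ x ∈ σ.support, τ x = if σ x = a then b else σ x := by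
    intro x hx
    have hσx : σ x ∈ σ.support := Equiv.Perm.apply_mem_support.mpr hx
    by_cases h : σ x = a
    · simp [hτ, Equiv.Perm.mul_apply, h, Equiv.swap_apply_left]
    · have hxb : σ x ≠ b := fun e => hb (e ▸ hσx)
      rw [hτ, Equiv.Perm.mul_apply, Equiv.swap_apply_of_ne_of_ne h hxb, if_neg h]
  have hsup : τ.support = insert b σ.support := by
    ext x
    simp only [Finset.mem_insert, Equiv.Perm.mem_support]
    constructor
    · intro hx
      by_cases hxb : x = b
      · exact Or.inl hxb
      right
      by_contra hxs
      have hσx : σ x = x := hxs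
      have hxa : x ≠ a := fun e => Equiv.Perm.mem_support.mp ha (e ▸ hσx)
      exact hx (by rw [hτ, Equiv.Perm.mul_apply, hσx,
        Equiv.swap_apply_of_ne_of_ne hxa hxb])
    · rintro (rfl | hx)
      · rw [hτb]; exact hab
      · have hx' : x ∈ σ.support := Equiv.Perm.mem_support.mpr hx
        rw [hτx x hx']
        split_ifs with h
        · exact fun e => hb (e ▸ hx')
        · exact hx
  have key : ∀ k : ℕ, τ.SameCycle b ((σ ^ k) a) := by
    intro k
    induction k with
    | zero => exact ⟨1, by simpa using hτb⟩
    | succ k ih =>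
      set z := (σ ^ k) a with hz
      have hzs : z ∈ σ.support := by
        rw [hz]; exact Equiv.Perm.pow_apply_mem_support.mpr ha
      have hsz : (σ ^ (k + 1)) a = σ z := by rw [pow_succ', Equiv.Perm.mul_apply]
      by_cases hcase : σ z = a
      · rw [hsz, hcase]; exact ⟨1, by simpa using hτb⟩
      · have hτz : τ z = σ z := by rw [hτx z hzs, if_neg hcase]
        rw [hsz, ← hτz]
        exact ih.trans ⟨1, by simp⟩
  refine ⟨⟨b, by rw [hτb]; exact hab, ?_⟩, hsup⟩
  intro y hy
  have hy' : y = b ∨ y ∈ σ.support := by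
    have : y ∈ τ.support := Equiv.Perm.mem_support.mpr hy
    rw [hsup] at this
    simpa using this
  rcases hy' with rfl | hys
  · exact Equiv.Perm.SameCycle.refl _ _
  · obtain ⟨k, hk⟩ := hσ.exists_pow_eq (Equiv.Perm.mem_support.mp ha)
      (Equiv.Perm.mem_support.mp hys)
    exact hk ▸ key k

lemma crossing (F : Finset (Fin n × Fin n)) (hc : Conn F) (T : Finset (Fin n))
    (hT : T.Nonempty) (hTu : T ≠ Finset.univ) :
    ∃ p ∈ F, (p.1 ∈ T ∧ p.2 ∉ T) ∨ (p.2 ∈ T ∧ p.1 ∉ T) := by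
  obtain ⟨a, haT⟩ := hT
  obtain ⟨b, hbT⟩ : ∃ b, b ∉ T := by
    by_contra h
    push_neg at h
    exact hTu (Finset.eq_univ_iff_forall.mpr h)
  have key : ∀ x y : Fin n, Relation.EqvGen (Rel F) x y →
      ((x ∈ T ∧ y ∉ T) ∨ (y ∈ T ∧ x ∉ T)) →
      ∃ p ∈ F, (p.1 ∈ T ∧ p.2 ∉ T) ∨ (p.2 ∈ T ∧ p.1 ∉ T) := by
    intro x y h
    induction h with
    | rel u v huv =>
      intro hcr
      rcases huv with h | h
      · exact ⟨(u, v), h, by simpa using hcr⟩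
      · exact ⟨(v, u), h, by simpa using hcr.symm⟩
    | refl u => rintro (⟨h1, h2⟩ | ⟨h1, h2⟩) <;> exact absurd h1 h2
    | symm u v h ih => intro hcr; exact ih hcr.symm
    | trans u v w h1 h2 ih1 ih2 =>
      intro hcr
      by_cases hv : v ∈ T
      · rcases hcr with ⟨h1', h2'⟩ | ⟨h1', h2'⟩
        · exact ih2 (Or.inl ⟨hv, h2'⟩)
        · exact ih1 (Or.inr ⟨hv, h2'⟩)
      · rcases hcr with ⟨h1', h2'⟩ | ⟨h1', h2'⟩
        · exact ih1 (Or.inl ⟨h1', hv⟩)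
        · exact ih2 (Or.inr ⟨h1', hv⟩)
  exact key a b (hc a b) (Or.inl ⟨haT, hbT⟩)

lemma grow (F : Finset (Fin n × Fin n)) (hc : Conn F) :
    ∀ m : ℕ, ∀ T : Finset (Fin n), ∀ l : List (Fin n × Fin n),
      n - T.card ≤ m → l.Nodup → (∀ p ∈ l, p ∈ F ∧ p.1 ∈ T ∧ p.2 ∈ T) →
      ((l.map fun p => Equiv.swap p.1 p.2).prod).IsCycle →
      ((l.map fun p => Equiv.swap p.1 p.2).prod).support = T →
      ∃ l' : List (Fin n × Fin n), l'.Nodup ∧ (∀ p ∈ l', p ∈ F) ∧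
        ((l'.map fun p => Equiv.swap p.1 p.2).prod).IsCycle ∧
        ((l'.map fun p => Equiv.swap p.1 p.2).prod).support = Finset.univ := by
  intro m
  induction m with
  | zero =>
    intro T l h0 hnd hent hcyc hsup
    have hTcard : T.card = Fintype.card (Fin n) := by
      have h1 : T.card ≤ Fintype.card (Fin n) := T.card_le_univ
      rw [Fintype.card_fin] at h1 ⊢
      omega
    have hTu : T = Finset.univ := Finset.eq_univ_of_card T hTcard
    exact ⟨l, hnd, fun p hp => (hent p hp).1, hcyc, hTu ▸ hsup⟩
  | succ m ih =>
    intro T l h0 hnd hent hcyc hsup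
    by_cases hTu : T = Finset.univ
    · exact ⟨l, hnd, fun p hp => (hent p hp).1, hcyc, hTu ▸ hsup⟩
    have hTne : T.Nonempty := by
      obtain ⟨x, hx, -⟩ := hcyc
      exact ⟨x, hsup ▸ Equiv.Perm.mem_support.mpr hx⟩
    have hcard : T.card < n := by
      have := Finset.card_lt_card (Finset.ssubset_univ_iff.mpr hTu)
      simpa using this
    obtain ⟨p, hpF, hcross⟩ := crossing F hc T hTne hTu
    rcases hcross with ⟨h1, h2⟩ | ⟨h1, h2⟩
    · -- p.1 ∈ T, p.2 ∉ T
      have hswap := isCycle_swap_mul hcyc (hsup ▸ h1) (hsup ▸ h2)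
      have hprod : ((( p :: l).map fun q => Equiv.swap q.1 q.2).prod)
          = Equiv.swap p.1 p.2 * (l.map fun q => Equiv.swap q.1 q.2).prod := by
        simp [List.map_cons, List.prod_cons]
      refine ih (insert p.2 T) (p :: l) ?_ ?_ ?_ ?_ ?_
      · rw [Finset.card_insert_of_notMem h2]; omega
      · exact List.nodup_cons.mpr ⟨fun hpl => h2 (hent p hpl).2.2, hnd⟩
      · intro q hq
        rcases List.mem_cons.mp hq with rfl | hq
        · exact ⟨hpF, Finset.mem_insert_of_mem h1, Finset.mem_insert_self _ _⟩
        · obtain ⟨hqF, hq1, hq2⟩ := hent q hq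
          exact ⟨hqF, Finset.mem_insert_of_mem hq1, Finset.mem_insert_of_mem hq2⟩
      · rw [hprod]; exact hswap.1
      · rw [hprod, hswap.2, hsup]
    · -- p.2 ∈ T, p.1 ∉ T
      have hswap := isCycle_swap_mul hcyc (hsup ▸ h1) (hsup ▸ h2)
      have hprod : ((( p :: l).map fun q => Equiv.swap q.1 q.2).prod)
          = Equiv.swap p.2 p.1 * (l.map fun q => Equiv.swap q.1 q.2).prod := by
        simp [List.map_cons, List.prod_cons, Equiv.swap_comm]
      refine ih (insert p.1 T) (p :: l) ?_ ?_ ?_ ?_ ?_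
      · rw [Finset.card_insert_of_notMem h2]; omega
      · exact List.nodup_cons.mpr ⟨fun hpl => h2 (hent p hpl).2.1, hnd⟩
      · intro q hq
        rcases List.mem_cons.mp hq with rfl | hq
        · exact ⟨hpF, Finset.mem_insert_self _ _, Finset.mem_insert_of_mem h1⟩
        · obtain ⟨hqF, hq1, hq2⟩ := hent q hq
          exact ⟨hqF, Finset.mem_insert_of_mem hq1, Finset.mem_insert_of_mem hq2⟩
      · rw [hprod]; exact hswap.1
      · rw [hprod, hswap.2, hsup]

lemma F_nonempty (hn : 3 ≤ n) (F : Finset (Fin n × Fin n)) (hc : Conn F) : ∃ p, p ∈ F := by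
  have key : ∀ x y : Fin n, Relation.EqvGen (Rel F) x y → x = y ∨ ∃ p, p ∈ F := by
    intro x y h
    induction h with
    | rel u v huv =>
      rcases huv with h | h
      · exact Or.inr ⟨(u, v), h⟩
      · exact Or.inr ⟨(v, u), h⟩
    | refl u => exact Or.inl rfl
    | symm u v _ ih => rcases ih with h | h; exacts [Or.inl h.symm, Or.inr h]
    | trans u v w _ _ ih1 ih2 =>
      rcases ih1 with h1 | h1
      · rcases ih2 with h2 | h2
        · exact Or.inl (h1.trans h2)
        · exact Or.inr h2
      · exact Or.inr h1
  have h01 : (⟨0, by omega⟩ : Fin n) ≠ ⟨1, by omega⟩ := by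
    intro h
    have := congrArg Fin.val h
    simp at this
  rcases key _ _ (hc ⟨0, by omega⟩ ⟨1, by omega⟩) with h | h
  · exact absurd h h01
  · exact h

lemma rhs_of_conn (hn : 3 ≤ n) (F : Finset (Fin n × Fin n))
    (hF : ∀ p ∈ F, p.1 < p.2) (hc : Conn F) :
    ∃ S ⊆ F, ∃ l : List (Fin n × Fin n), l.Nodup ∧ l.toFinset = S ∧
      ((l.map fun p => Equiv.swap p.1 p.2).prod).IsCycle ∧
      ((l.map fun p => Equiv.swap p.1 p.2).prod).support = Finset.univ := by
  obtain ⟨p0, hp0⟩ := F_nonempty hn F hc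
  have hne : p0.1 ≠ p0.2 := (hF p0 hp0).ne
  have hprod : (([p0].map fun p => Equiv.swap p.1 p.2).prod) = Equiv.swap p0.1 p0.2 := by
    simp
  obtain ⟨l', hnd, hlF, hcyc, hsup⟩ := grow F hc n ({p0.1, p0.2} : Finset (Fin n)) [p0]
    (Nat.sub_le _ _)
    (List.nodup_singleton p0)
    (by
      rintro q hq
      rw [List.mem_singleton] at hq
      subst hq
      exact ⟨hp0, Finset.mem_insert_self _ _, Finset.mem_insert_of_mem (Finset.mem_singleton_self _)⟩)
    (by rw [hprod]; exact Equiv.Perm.isCycle_swap hne)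
    (by rw [hprod]; exact Equiv.Perm.support_swap hne)
  refine ⟨l'.toFinset, ?_, l', hnd, rfl, hcyc, hsup⟩
  intro q hq
  exact hlF q (List.mem_toFinset.mp hq)

end Cycle

end CtrlAux

theorem controllability_n_cycle (n : ℕ) (hn : 3 ≤ n) (F : Finset (Fin n × Fin n))
    (hF : ∀ p ∈ F, p.1 < p.2) :
    (lieGen n {M | ∃ p ∈ F, M = Omega n p.1 p.2} : Set (Matrix (Fin n) (Fin n) ℝ))
        = {M | Mᵀ = -M} ↔
      ∃ S ⊆ F, ∃ l : List (Fin n × Fin n), l.Nodup ∧ l.toFinset = S ∧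
        ((l.map fun p => Equiv.swap p.1 p.2).prod).IsCycle ∧
        ((l.map fun p => Equiv.swap p.1 p.2).prod).support = Finset.univ := by
  constructor
  · intro h
    exact CtrlAux.rhs_of_conn hn F hF (CtrlAux.conn_of_eq_skew F h)
  · rintro ⟨S, hS, l, hnd, hSl, hcyc, hsup⟩
    apply CtrlAux.eq_skew_of_conn
    apply CtrlAux.conn_of_cycle F l (fun p hp => hS (hSl ▸ List.mem_toFinset.mpr hp)) hcyc hsup
end

section
/- Let n ≥ 2 and let F = {Ω_{i₁j₁},…,Ω_{i_mj_m}} be a set of m distinct elements of the standard basis {Ω_{ij} : 1 ≤ i < j ≤ n} of so(n). If the Lie subalgebra Lie(F) equals so(n), then m ≥ n − 1. -/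
open Matrix

attribute [local instance 100] LieRing.ofAssociativeRing

/-- Matrices whose `(i,j)` entry vanishes whenever `x i ≠ x j` form a Lie subalgebra. -/
noncomputable def blockAlg (n : ℕ) (x : Fin n → ℝ) :
    LieSubalgebra ℝ (Matrix (Fin n) (Fin n) ℝ) where
  carrier := {M | ∀ i j, x i ≠ x j → M i j = 0}
  zero_mem' := by intro i j _; simp
  add_mem' := by
    intro M N hM hN i j hij
    simp [Matrix.add_apply, hM i j hij, hN i j hij]
  smul_mem' := by
    intro c M hM i j hij
    simp [Matrix.smul_apply, hM i j hij]
  lie_mem' := by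
    intro M N hM hN i j hij
    have mul_mem : ∀ (A B : Matrix (Fin n) (Fin n) ℝ),
        (∀ i j, x i ≠ x j → A i j = 0) → (∀ i j, x i ≠ x j → B i j = 0) →
        (A * B) i j = 0 := by
      intro A B hA hB
      rw [Matrix.mul_apply]
      apply Finset.sum_eq_zero
      intro k _
      by_cases hk : x i = x k
      · rw [hB k j (hk ▸ hij), mul_zero]
      · rw [hA i k hk, zero_mul]
    have : (⁅M, N⁆ : Matrix (Fin n) (Fin n) ℝ) = M * N - N * M := Ring.lie_def M N
    rw [this, Matrix.sub_apply, mul_mem M N hM hN, mul_mem N M hN hM, sub_zero]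

theorem controllability_needs_n_sub_one_controls (n : ℕ) (hn : 2 ≤ n)
    (F : Finset (Fin n × Fin n)) (hF : ∀ p ∈ F, p.1 < p.2)
    (h : (lieGen n {M | ∃ p ∈ F, M = Omega n p.1 p.2} : Set (Matrix (Fin n) (Fin n) ℝ))
      = {M | Mᵀ = -M}) :
    n - 1 ≤ F.card := by
  by_contra hlt
  push_neg at hlt
  have hcard : F.card ≤ n - 2 := by omega
  -- the linear map x ↦ (x p.1 - x p.2)_{p ∈ F}
  let Φ : (Fin n → ℝ) →ₗ[ℝ] ({p : Fin n × Fin n // p ∈ F} → ℝ) :=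
    LinearMap.pi fun p => (LinearMap.proj p.1.1 : (Fin n → ℝ) →ₗ[ℝ] ℝ) - (LinearMap.proj p.1.2 : (Fin n → ℝ) →ₗ[ℝ] ℝ)
  have hrank : Module.finrank ℝ (LinearMap.range Φ) + Module.finrank ℝ (LinearMap.ker Φ)
      = Module.finrank ℝ (Fin n → ℝ) := LinearMap.finrank_range_add_finrank_ker Φ
  have hdomain : Module.finrank ℝ (Fin n → ℝ) = n := by simp
  have hrange : Module.finrank ℝ (LinearMap.range Φ) ≤ F.card := by
    have h1 := Submodule.finrank_le (LinearMap.range Φ)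
    have h2 : Module.finrank ℝ ({p : Fin n × Fin n // p ∈ F} → ℝ) = F.card := by
      rw [Module.finrank_pi]
      exact Fintype.card_coe F
    omega
  have hker : 2 ≤ Module.finrank ℝ (LinearMap.ker Φ) := by omega
  -- constants
  set C : Submodule ℝ (Fin n → ℝ) := Submodule.span ℝ {(fun _ => 1 : Fin n → ℝ)} with hC
  have hCrank : Module.finrank ℝ C ≤ 1 := by
    rcases eq_or_ne (fun _ => 1 : Fin n → ℝ) 0 with h0 | h0
    · rw [hC, h0, Submodule.span_zero_singleton]; simp
    · rw [hC]
      exact le_of_eq (finrank_span_singleton h0)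
  have hnotle : ¬ LinearMap.ker Φ ≤ C := by
    intro hle
    have := Submodule.finrank_mono hle
    omega
  obtain ⟨x, hxker, hxC⟩ := SetLike.not_le_iff_exists.mp hnotle
  -- x is constant across each edge
  have hedge : ∀ p ∈ F, x p.1 = x p.2 := by
    intro p hp
    have : Φ x = 0 := hxker
    have := congrFun this ⟨p, hp⟩
    simpa [Φ, sub_eq_zero] using this
  -- x is not constant
  have hnc : ∃ a b : Fin n, x a ≠ x b := by
    by_contra hcon
    push_neg at hcon
    apply hxC
    have hne0 : 0 < n := by omega
    have : x = x ⟨0, hne0⟩ • (fun _ => 1 : Fin n → ℝ) := by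
      funext i
      simp [hcon i ⟨0, hne0⟩]
    rw [this]
    exact Submodule.smul_mem _ _ (Submodule.subset_span rfl)
  obtain ⟨a, b, hab⟩ := hnc
  have hne : a ≠ b := fun e => hab (e ▸ rfl)
  -- the generators lie in blockAlg n x
  have hgen : {M | ∃ p ∈ F, M = Omega n p.1 p.2} ⊆ (blockAlg n x : Set (Matrix (Fin n) (Fin n) ℝ)) := by
    rintro M ⟨p, hp, rfl⟩
    intro i j hij
    have hpx := hedge p hp
    simp only [Omega, Matrix.sub_apply, Matrix.single]
    have h1 : ¬ (p.1 = i ∧ p.2 = j) := by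
      rintro ⟨rfl, rfl⟩; exact hij hpx
    have h2 : ¬ (p.2 = i ∧ p.1 = j) := by
      rintro ⟨rfl, rfl⟩; exact hij hpx.symm
    simp [Matrix.of_apply, h1, h2]
  have hle : lieGen n {M | ∃ p ∈ F, M = Omega n p.1 p.2} ≤ blockAlg n x :=
    (LieSubalgebra.lieSpan_le).mpr hgen
  -- Omega a b is skew, hence in the lie span by h
  have hskew : (Omega n a b)ᵀ = -(Omega n a b) := by
    ext i j
    by_cases h1 : a = j <;> by_cases h2 : b = i <;>
      simp [Omega, Matrix.transpose_apply, Matrix.single, h1, h2, and_comm]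
  have hmem : Omega n a b ∈ (lieGen n {M | ∃ p ∈ F, M = Omega n p.1 p.2} :
      Set (Matrix (Fin n) (Fin n) ℝ)) := by
    rw [h]; exact hskew
  have hinV : Omega n a b ∈ blockAlg n x := hle hmem
  have hzero : Omega n a b a b = 0 := hinV a b hab
  have hone : Omega n a b a b = 1 := by
    simp [Omega, Matrix.sub_apply, Matrix.single, hne, Ne.symm hne]
  rw [hone] at hzero
  exact one_ne_zero hzero
end

section
/- Let F be a set of pairs (i,j) with 1 ≤ i < j ≤ n, and let Γ_F be the simple graph on vertex set {1,…,n} whose edges are the pairs in F. Then the Lie subalgebra Lie({Ω_{ij} : (i,j) ∈ F}) equals the linear span of the set {Ω_{ij} : i ≠ j and the vertices i and j lie in the same connected component of Γ_F (i.e., i and j are joined by a path in Γ_F)}. -/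
open Matrix

attribute [local instance 100] LieRing.ofAssociativeRing

/-- The simple graph on `{1,…,n}` whose edges are the pairs in `F`. -/
def graphOf (n : ℕ) (F : Set (Fin n × Fin n)) : SimpleGraph (Fin n) where
  Adj a b := a ≠ b ∧ ((a, b) ∈ F ∨ (b, a) ∈ F)
  symm := by
    constructor
    intro a b h
    exact ⟨h.1.symm, h.2.symm⟩
  loopless := by
    constructor
    intro a h
    exact h.1 rfl

lemma omega_skew (n : ℕ) (i j : Fin n) : Omega n j i = - Omega n i j := by
  simp [Omega]

lemma bracket_omega (n : ℕ) (i j k : Fin n) (hij : i ≠ j) (hjk : j ≠ k) (hik : i ≠ k) :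
    ⁅Omega n i j, Omega n j k⁆ = Omega n i k := by
  simp only [Omega, Ring.lie_def, Matrix.sub_mul, Matrix.mul_sub,
    Matrix.single_mul_single_same, Matrix.single_mul_single_of_ne, hij, hjk, hik,
    hij.symm, hjk.symm, hik.symm, Ne, not_false_iff, one_mul]
  abel

lemma bracket_omega_disjoint (n : ℕ) (i j k l : Fin n) (h1 : i ≠ k) (h2 : i ≠ l)
    (h3 : j ≠ k) (h4 : j ≠ l) :
    ⁅Omega n i j, Omega n k l⁆ = 0 := by
  simp only [Omega, Ring.lie_def, Matrix.sub_mul, Matrix.mul_sub,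
    Matrix.single_mul_single_of_ne, h1, h2, h3, h4, h1.symm, h2.symm, h3.symm, h4.symm,
    Ne, not_false_iff]
  abel

theorem lieGen_eq_span_of_connected_pairs (n : ℕ) (F : Set (Fin n × Fin n))
    (hF : ∀ p ∈ F, p.1 < p.2) :
    (lieGen n {M | ∃ p ∈ F, M = Omega n p.1 p.2} : Set (Matrix (Fin n) (Fin n) ℝ)) =
      (Submodule.span ℝ
        {M | ∃ i j : Fin n, i ≠ j ∧ (graphOf n F).Reachable i j ∧ M = Omega n i j} :
        Set (Matrix (Fin n) (Fin n) ℝ)) := by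
  set G := graphOf n F with hG
  set S : Set (Matrix (Fin n) (Fin n) ℝ) := {M | ∃ p ∈ F, M = Omega n p.1 p.2} with hS
  set T : Set (Matrix (Fin n) (Fin n) ℝ) :=
    {M | ∃ i j : Fin n, i ≠ j ∧ G.Reachable i j ∧ M = Omega n i j} with hT
  set L := lieGen n S with hL
  -- adjacency gives membership in L
  have hadj : ∀ i j : Fin n, G.Adj i j → Omega n i j ∈ L := by
    intro i j hij
    rcases hij.2 with h | h
    · exact LieSubalgebra.subset_lieSpan ⟨(i, j), h, rfl⟩
    · have : Omega n i j = - Omega n j i := by rw [omega_skew]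
      rw [this]
      exact neg_mem (LieSubalgebra.subset_lieSpan ⟨(j, i), h, rfl⟩)
  -- reachability gives membership in L
  have hreach : ∀ i j : Fin n, i ≠ j → G.Reachable i j → Omega n i j ∈ L := by
    intro i j hij ⟨w⟩
    induction w with
    | nil => exact absurd rfl hij
    | @cons a b c hab w ih =>
      by_cases hbc : b = c
      · subst hbc; exact hadj _ _ hab
      · by_cases hac : a = b
        · exact absurd hac hab.ne
        · have h1 : Omega n a b ∈ L := hadj _ _ hab
          have h2 : Omega n b c ∈ L := ih hbc
          have := L.lie_mem h1 h2
          rwa [bracket_omega n a b c hab.ne hbc hij] at this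
  -- brackets of elements of T stay in the span of T
  have hTbr : ∀ a ∈ T, ∀ b ∈ T, ⁅a, b⁆ ∈ Submodule.span ℝ T := by
    rintro _ ⟨i, j, hij, rij, rfl⟩ _ ⟨k, l, hkl, rkl, rfl⟩
    by_cases hjk : j = k
    · subst hjk
      by_cases hil : i = l
      · subst hil
        rw [show Omega n j i = - Omega n i j from omega_skew n i j, lie_neg, lie_self, neg_zero]
        exact zero_mem _
      · rw [bracket_omega n i j l hij hkl hil]
        exact Submodule.subset_span ⟨i, l, hil, rij.trans rkl, rfl⟩
    · by_cases hil : i = l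
      · subst hil
        rw [show Omega n k i = - Omega n i k from omega_skew n i k, lie_neg,
          show Omega n i j = - Omega n j i from omega_skew n j i, neg_lie, neg_neg,
          bracket_omega n j i k (Ne.symm hij) (fun h => hkl h.symm) hjk]
        exact Submodule.subset_span ⟨j, k, hjk, (rij.symm.trans rkl.symm), rfl⟩
      · by_cases hik : i = k
        · subst hik
          by_cases hjl : j = l
          · subst hjl; rw [lie_self]; exact zero_mem _
          · rw [show Omega n i j = - Omega n j i from omega_skew n j i, neg_lie,
              bracket_omega n j i l (Ne.symm hij) hkl hjl]
            exact neg_mem (Submodule.subset_span ⟨j, l, hjl, rij.symm.trans rkl, rfl⟩)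
        · by_cases hjl : j = l
          · subst hjl
            rw [show Omega n k j = - Omega n j k from omega_skew n j k, lie_neg,
              bracket_omega n i j k hij (fun h => hjk h) hik]
            exact neg_mem (Submodule.subset_span ⟨i, k, hik, rij.trans rkl.symm, rfl⟩)
          · rw [bracket_omega_disjoint n i j k l hik hil hjk hjl]
            exact zero_mem _
  -- the span of T is closed under brackets
  have hclosed : ∀ x ∈ Submodule.span ℝ T, ∀ y ∈ Submodule.span ℝ T,
      ⁅x, y⁆ ∈ Submodule.span ℝ T := by
    intro x hx
    induction hx using Submodule.span_induction with
    | mem a ha =>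
      intro y hy
      induction hy using Submodule.span_induction with
      | mem b hb => exact hTbr a ha b hb
      | zero => rw [lie_zero]; exact zero_mem _
      | add u v hu hv ihu ihv => rw [lie_add]; exact add_mem ihu ihv
      | smul c u hu ihu => rw [lie_smul]; exact Submodule.smul_mem _ _ ihu
    | zero => intro y hy; rw [zero_lie]; exact zero_mem _
    | add u v hu hv ihu ihv =>
      intro y hy; rw [add_lie]; exact add_mem (ihu y hy) (ihv y hy)
    | smul c u hu ihu =>
      intro y hy; rw [smul_lie]; exact Submodule.smul_mem _ _ (ihu y hy)
  -- package span T as a Lie subalgebra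
  let K : LieSubalgebra ℝ (Matrix (Fin n) (Fin n) ℝ) :=
    { Submodule.span ℝ T with
      lie_mem' := fun {x y} hx hy => hclosed x hx y hy }
  apply le_antisymm
  · have : L ≤ K := by
      rw [hL, lieGen, LieSubalgebra.lieSpan_le]
      rintro _ ⟨p, hp, rfl⟩
      have hne : p.1 ≠ p.2 := ne_of_lt (hF p hp)
      exact Submodule.subset_span ⟨p.1, p.2, hne, SimpleGraph.Adj.reachable ⟨hne, Or.inl hp⟩, rfl⟩
    exact this
  · have : Submodule.span ℝ T ≤ L.toSubmodule := by
      rw [Submodule.span_le]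
      rintro _ ⟨i, j, hij, rij, rfl⟩
      exact hreach i j hij rij
    exact this
end

section
/- Let n ≥ 2 and let F be a set of pairs (i,j) with 1 ≤ i < j ≤ n. Then the Lie subalgebra Lie({Ω_{ij} : (i,j) ∈ F}) equals so(n) if and only if the simple graph Γ_F with vertex set {1,…,n} and edge set F is connected. -/
open Matrix

attribute [local instance 100] LieRing.ofAssociativeRing

lemma EE0 {n : ℕ} {i j k l : Fin n} (h : j ≠ k) :
    single i j (1:ℝ) * single k l 1 = 0 :=
  Matrix.single_mul_single_of_ne (c := (1:ℝ)) i j k h 1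

lemma bracket_omega_s7 {n : ℕ} {a b c : Fin n} (h1 : a ≠ b) (h2 : b ≠ c) (h3 : a ≠ c) :
    ⁅Omega n a b, Omega n b c⁆ = Omega n a c := by
  simp only [Omega, Ring.lie_def, Matrix.sub_mul, Matrix.mul_sub,
    single_mul_single_same, EE0 h1, EE0 h2, EE0 h3,
    EE0 h1.symm, EE0 h2.symm, EE0 h3.symm, one_mul]
  abel

lemma omega_symm {n : ℕ} (i j : Fin n) : Omega n j i = -Omega n i j := by
  unfold Omega; rw [neg_sub]

lemma stdT {n : ℕ} (i j : Fin n) :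
    (single i j (1:ℝ))ᵀ = single j i 1 := by
  ext a b
  simp only [transpose_apply, single, of_apply]
  exact if_congr and_comm rfl rfl

lemma omega_transpose {n : ℕ} (i j : Fin n) : (Omega n i j)ᵀ = -(Omega n i j) := by
  unfold Omega
  rw [transpose_sub, stdT, stdT, neg_sub]

/-- membership of `Omega a b` for reachable vertices -/
lemma omega_mem_of_walk {n : ℕ} {F : Set (Fin n × Fin n)} {a b : Fin n}
    (w : (graphOf n F).Walk a b) (hab : a ≠ b) :
    Omega n a b ∈ lieGen n {M | ∃ p ∈ F, M = Omega n p.1 p.2} := by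
  induction w with
  | nil => exact absurd rfl hab
  | @cons u v w h p ih =>
    have huv : u ≠ v := h.1
    have hmem_uv : Omega n u v ∈ lieGen n {M | ∃ p ∈ F, M = Omega n p.1 p.2} := by
      rcases h.2 with h' | h'
      · exact LieSubalgebra.subset_lieSpan ⟨(u, v), h', rfl⟩
      · rw [show Omega n u v = -Omega n v u from (omega_symm v u).symm ▸ rfl]
        exact neg_mem (LieSubalgebra.subset_lieSpan ⟨(v, u), h', rfl⟩)
    by_cases hvw : v = w
    · subst hvw; exact hmem_uv
    · have hOvw := ih hvw
      rw [← bracket_omega_s7 huv hvw hab]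
      exact LieSubalgebra.lie_mem _ hmem_uv hOvw

/-- The Lie subalgebra of matrices supported on the reachability classes. -/
def compAlg (n : ℕ) (F : Set (Fin n × Fin n)) :
    LieSubalgebra ℝ (Matrix (Fin n) (Fin n) ℝ) where
  carrier := {M | ∀ a b, ¬ (graphOf n F).Reachable a b → M a b = 0}
  zero_mem' := by intro a b _; rfl
  add_mem' := by
    intro x y hx hy a b hab
    simp only [Matrix.add_apply, hx a b hab, hy a b hab, add_zero]
  smul_mem' := by
    intro c x hx a b hab
    simp only [Matrix.smul_apply, hx a b hab, smul_zero]
  lie_mem' := by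
    intro x y hx hy a b hab
    rw [Ring.lie_def]
    have key : ∀ (u v : Matrix (Fin n) (Fin n) ℝ),
        (∀ a b, ¬ (graphOf n F).Reachable a b → u a b = 0) →
        (∀ a b, ¬ (graphOf n F).Reachable a b → v a b = 0) →
        (u * v) a b = 0 := by
      intro u v hu hv
      rw [Matrix.mul_apply]
      apply Finset.sum_eq_zero
      intro k _
      by_cases hk : (graphOf n F).Reachable a k
      · rw [hv k b (fun hkb => hab (hk.trans hkb)), mul_zero]
      · rw [hu a k hk, zero_mul]
    simp only [Matrix.sub_apply, key x y hx hy, key y x hy hx, sub_zero]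

lemma skew_eq_sum {n : ℕ} (M : Matrix (Fin n) (Fin n) ℝ) (hM : Mᵀ = -M) :
    M = ∑ i, ∑ j, ((1/2 : ℝ) * M i j) • Omega n i j := by
  have e1 : ∑ i, ∑ j, single i j ((1/2 : ℝ) * M i j) = (1/2 : ℝ) • M := by
    conv_rhs => rw [matrix_eq_sum_single ((1/2 : ℝ) • M)]
    simp [Matrix.smul_apply]
  have e2 : ∑ i, ∑ j, single j i ((1/2 : ℝ) * M i j) = (1/2 : ℝ) • Mᵀ := by
    rw [Finset.sum_comm]
    conv_rhs => rw [matrix_eq_sum_single ((1/2 : ℝ) • Mᵀ)]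
    simp [Matrix.smul_apply, Matrix.transpose_apply]
  have : ∑ i, ∑ j, ((1/2 : ℝ) * M i j) • Omega n i j
      = (∑ i, ∑ j, single i j ((1/2 : ℝ) * M i j))
        - ∑ i, ∑ j, single j i ((1/2 : ℝ) * M i j) := by
    simp only [Omega, smul_sub, smul_single, smul_eq_mul, mul_one,
      Finset.sum_sub_distrib]
  rw [this, e1, e2, hM]
  module

theorem lieGen_eq_so_iff_connected (n : ℕ) (hn : 2 ≤ n) (F : Set (Fin n × Fin n))
    (hF : ∀ p ∈ F, p.1 < p.2) :
    (lieGen n {M | ∃ p ∈ F, M = Omega n p.1 p.2} : Set (Matrix (Fin n) (Fin n) ℝ))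
      = {M | Mᵀ = -M} ↔ (graphOf n F).Connected := by
  set S : Set (Matrix (Fin n) (Fin n) ℝ) := {M | ∃ p ∈ F, M = Omega n p.1 p.2} with hS
  constructor
  · intro hEq
    haveI : Nonempty (Fin n) := ⟨⟨0, by omega⟩⟩
    refine ⟨fun a b => ?_⟩
    by_contra hreach
    have hab : a ≠ b := fun h => hreach (h ▸ SimpleGraph.Reachable.refl a)
    -- Omega a b is skew, hence in the lieGen by hEq
    have hmem : Omega n a b ∈ lieGen n S := by
      have : Omega n a b ∈ (lieGen n S : Set (Matrix (Fin n) (Fin n) ℝ)) := by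
        rw [hEq]; exact omega_transpose a b
      exact this
    -- but lieGen ≤ compAlg
    have hle : lieGen n S ≤ compAlg n F := by
      apply LieSubalgebra.lieSpan_le.mpr
      rintro M ⟨p, hp, rfl⟩
      intro x y hxy
      have hadj : (graphOf n F).Adj p.1 p.2 := ⟨ne_of_lt (hF p hp), Or.inl hp⟩
      simp only [Omega, Matrix.sub_apply, single, of_apply]
      have c1 : ¬(p.1 = x ∧ p.2 = y) := fun ⟨e1, e2⟩ => hxy (e1 ▸ e2 ▸ hadj.reachable)
      have c2 : ¬(p.2 = x ∧ p.1 = y) := fun ⟨e1, e2⟩ => hxy (e1 ▸ e2 ▸ hadj.symm.reachable)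
      rw [if_neg c1, if_neg c2, sub_zero]
    have h0 := hle hmem a b hreach
    have h1 : Omega n a b a b = 1 := by
      simp [Omega, single, (Ne.symm hab : b ≠ a)]
    rw [h0] at h1
    norm_num at h1
  · intro hconn
    ext M
    constructor
    · intro hM
      have hsub : S ⊆ {M : Matrix (Fin n) (Fin n) ℝ | Mᵀ = -M} := by
        rintro M' ⟨p, hp, rfl⟩
        exact omega_transpose p.1 p.2
      -- {M | Mᵀ = -M} is a Lie subalgebra; show directly
      let skewAlg : LieSubalgebra ℝ (Matrix (Fin n) (Fin n) ℝ) :=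
        { carrier := {M : Matrix (Fin n) (Fin n) ℝ | Mᵀ = -M}
          zero_mem' := by simp
          add_mem' := by
            intro x y hx hy
            simp only [Set.mem_setOf_eq] at *
            rw [transpose_add, hx, hy, neg_add]
          smul_mem' := by
            intro c x hx
            simp only [Set.mem_setOf_eq] at *
            rw [transpose_smul, hx, smul_neg]
          lie_mem' := by
            intro x y hx hy
            simp only [Set.mem_setOf_eq] at *
            rw [Ring.lie_def, transpose_sub, transpose_mul, transpose_mul, hx, hy]
            simp only [Matrix.neg_mul, Matrix.mul_neg, neg_neg, neg_sub] }
      have hsub' : S ⊆ (skewAlg : Set (Matrix (Fin n) (Fin n) ℝ)) := hsub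
      exact LieSubalgebra.lieSpan_le.mpr hsub' hM
    · intro hM
      have hM' : Mᵀ = -M := hM
      show M ∈ lieGen n S
      rw [skew_eq_sum M hM']
      apply sum_mem
      intro i _
      apply sum_mem
      intro j _
      by_cases hij : i = j
      · subst hij
        have : Omega n i i = 0 := by unfold Omega; rw [sub_self]
        rw [this, smul_zero]
        exact zero_mem _
      · apply LieSubalgebra.smul_mem
        obtain ⟨w⟩ := hconn.preconnected i j
        exact omega_mem_of_walk w hij
end

section
/- Let σ₁,…,σ_k be transpositions in the symmetric group S_n such that the product σ_k⋯σ₁ is a cycle of length k+1 (a cycle whose support has exactly k+1 elements). Then for every permutation η of {1,…,k}, the reordered product σ_{η(k)}⋯σ_{η(1)} is also a cycle of length k+1 with the same support as σ_k⋯σ₁. -/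
set_option linter.unusedSectionVars false
set_option maxHeartbeats 1000000

open Equiv Equiv.Perm List Relation

variable {α : Type*} [Fintype α] [DecidableEq α]

-- Auxiliary development: Dénes-style tree/transposition-factorization argument.



/-- one step along an edge of the "transposition graph" of `l` -/
def Stp (l : List (Perm α)) (u v : α) : Prop := ∃ t ∈ l, t u = v

/-- reachability in the transposition graph of `l` -/
def Rch (l : List (Perm α)) : α → α → Prop := ReflTransGen (Stp l)

/-- vertex set: union of the supports -/
def Vtx (l : List (Perm α)) : Finset α := l.foldr (fun t s => t.support ∪ s) ∅

lemma mem_Vtx {l : List (Perm α)} {x : α} : x ∈ Vtx l ↔ ∃ t ∈ l, x ∈ t.support := by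
  induction l with
  | nil => simp [Vtx]
  | cons t l ih => simp [Vtx] at ih ⊢; rw [ih]

lemma swap_invol {t : Perm α} (ht : t.IsSwap) (u : α) : t (t u) = u := by
  obtain ⟨a, b, hab, rfl⟩ := ht; simp

lemma Rch_symm {l : List (Perm α)} (hl : ∀ t ∈ l, t.IsSwap) {x y : α} (h : Rch l x y) :
    Rch l y x :=
  (@Relation.ReflTransGen.symmetric _ _
    ⟨fun _ _ ⟨t, ht, htu⟩ => ⟨t, ht, by rw [← htu, swap_invol (hl t ht)]⟩⟩).symm _ _ h

lemma Rch_mono {l l' : List (Perm α)} (h : ∀ t ∈ l, t ∈ l') {x y : α} :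
    Rch l x y → Rch l' x y :=
  fun hr => ReflTransGen.mono (r := Stp l) (p := Stp l') (fun _ _ ⟨t, ht, e⟩ => ⟨t, h t ht, e⟩) x y hr

lemma Rch_nil {x y : α} : Rch ([] : List (Perm α)) x y ↔ x = y := by
  constructor
  · intro h
    induction h with
    | refl => rfl
    | tail _ step _ => obtain ⟨t, ht, _⟩ := step; simp at ht
  · rintro rfl; exact ReflTransGen.refl

lemma swap_support_pair {t : Perm α} (ht : t.IsSwap) {z : α} (hz : z ∈ t.support) :
    t.support = {z, t z} := by
  obtain ⟨a, b, hab, rfl⟩ := ht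
  rw [support_swap hab] at hz ⊢
  rcases Finset.mem_insert.mp hz with rfl | hz
  · rw [swap_apply_left]
  · rw [Finset.mem_singleton.mp hz, swap_apply_right, Finset.pair_comm]

lemma Rch_cut {t : Perm α} {l : List (Perm α)} {x y : α} (h : Rch (t :: l) x y) :
    Rch l x y ∨ ((∃ z ∈ t.support, Rch l x z) ∧ ∃ z ∈ t.support, Rch l z y) := by
  induction h with
  | refl => exact Or.inl ReflTransGen.refl
  | @tail b c hxb step ih =>
    obtain ⟨s, hs, rfl⟩ := step
    rcases List.mem_cons.mp hs with rfl | hs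
    · by_cases h0 : s b = b
      · rw [h0]; exact ih
      · have hb : b ∈ s.support := mem_support.mpr h0
        have hsb : s b ∈ s.support := apply_mem_support.mpr hb
        rcases ih with h1 | ⟨h1, _⟩
        · exact Or.inr ⟨⟨b, hb, h1⟩, ⟨s b, hsb, ReflTransGen.refl⟩⟩
        · exact Or.inr ⟨h1, ⟨s b, hsb, ReflTransGen.refl⟩⟩
    · have step' : Stp l b (s b) := ⟨s, hs, rfl⟩
      rcases ih with h1 | ⟨h1, z, hz, hzb⟩
      · exact Or.inl (h1.tail step')
      · exact Or.inr ⟨h1, z, hz, hzb.tail step'⟩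

lemma LemC : ∀ (l : List (Perm α)), (∀ t ∈ l, t.IsSwap) →
    ∀ (S roots : Finset α), (∀ x ∈ S, ∃ a ∈ roots, Rch l a x) →
    S.card ≤ l.length + roots.card := by
  intro l
  induction l with
  | nil =>
    intro _ S roots hcov
    have hsub : S ⊆ roots := by
      intro x hx
      obtain ⟨a, ha, hax⟩ := hcov x hx
      rwa [← Rch_nil.mp hax]
    simpa using Finset.card_le_card hsub
  | cons t l ih =>
    intro hswap S roots hcov
    have hswap₂ : ∀ s ∈ l, IsSwap s := fun s hs => hswap s (mem_cons_of_mem _ hs)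
    by_cases H : ∀ x ∈ S, ∃ a ∈ roots, Rch l a x
    · have := ih hswap₂ S roots H
      simp only [List.length_cons]; omega
    · push_neg at H
      obtain ⟨x₀, hx₀S, hnone⟩ := H
      obtain ⟨a₀, ha₀, ha₀x⟩ := hcov x₀ hx₀S
      rcases Rch_cut ha₀x with h | ⟨⟨z, hz, ha₀z⟩, _⟩
      · exact absurd h (hnone a₀ ha₀)
      have htz : t.support = {z, t z} :=
        swap_support_pair (hswap t (mem_cons_self)) hz
      have hcov' : ∀ x ∈ S, ∃ a ∈ insert (t z) roots, Rch l a x := by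
        intro x hx
        obtain ⟨a, ha, hax⟩ := hcov x hx
        rcases Rch_cut hax with h | ⟨_, ⟨w, hw, hwx⟩⟩
        · exact ⟨a, Finset.mem_insert_of_mem ha, h⟩
        · rw [htz] at hw
          rcases Finset.mem_insert.mp hw with rfl | hw
          · exact ⟨a₀, Finset.mem_insert_of_mem ha₀, ha₀z.trans hwx⟩
          · rw [Finset.mem_singleton.mp hw] at hwx
            exact ⟨t z, Finset.mem_insert_self _ _, hwx⟩
      have h1 := ih hswap₂ S (insert (t z) roots) hcov'
      have h2 := Finset.card_insert_le (t z) roots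
      simp only [List.length_cons]; omega

lemma first_step {l : List (Perm α)} {u x : α} (h : Rch l u x) (hne : x ≠ u) :
    ∃ s ∈ l, s u ≠ u := by
  induction h with
  | refl => exact absurd rfl hne
  | @tail b c hub step ih =>
    by_cases hbu : b = u
    · subst hbu
      obtain ⟨s, hs, hsu⟩ := step
      exact ⟨s, hs, by rw [hsu]; exact hne⟩
    · exact ih hbu

lemma Rch_prod (l : List (Perm α)) (z : α) : Rch l z (l.prod z) := by
  induction l generalizing z with
  | nil =>
    rw [List.prod_nil, Equiv.Perm.one_apply]
    exact ReflTransGen.refl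
  | cons t l ih =>
    have h1 : Rch (t :: l) z (l.prod z) := Rch_mono (fun s hs => mem_cons_of_mem _ hs) (ih z)
    exact h1.tail ⟨t, mem_cons_self, by rw [List.prod_cons]; rfl⟩

lemma Rch_pow (l : List (Perm α)) (z : α) (m : ℕ) : Rch l z ((l.prod ^ m) z) := by
  induction m generalizing z with
  | zero =>
    rw [pow_zero, Equiv.Perm.one_apply]
    exact ReflTransGen.refl
  | succ m ih =>
    have h : (l.prod ^ (m + 1)) z = l.prod ((l.prod ^ m) z) := by
      rw [pow_succ']; rfl
    rw [h]
    exact (ih z).trans (Rch_prod l _)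

lemma support_prod_subset (l : List (Perm α)) : l.prod.support ⊆ Vtx l := by
  induction l with
  | nil => simp [Vtx]
  | cons t l ih =>
    rw [List.prod_cons]
    refine (support_mul_le t l.prod).trans ?_
    intro x hx
    rcases Finset.mem_union.mp hx with h | h
    · exact mem_Vtx.mpr ⟨t, mem_cons_self, h⟩
    · obtain ⟨s, hs, hxs⟩ := mem_Vtx.mp (ih h)
      exact mem_Vtx.mpr ⟨s, mem_cons_of_mem _ hs, hxs⟩



lemma split_prod (l : List (Perm α)) (p : Perm α → Bool)
    (hcomm : ∀ x ∈ l, ∀ y ∈ l, p x = true → p y = false → Commute x y) :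
    l.prod = (l.filter p).prod * (l.filter (fun s => ! p s)).prod := by
  induction l with
  | nil => simp
  | cons t l ih =>
    have ih' := ih (fun x hx y hy => hcomm x (mem_cons_of_mem _ hx) y (mem_cons_of_mem _ hy))
    by_cases hp : p t = true
    · rw [List.prod_cons, filter_cons_of_pos hp, filter_cons_of_neg (by simp [hp]),
        List.prod_cons, ih', mul_assoc]
    · have hpf : p t = false := by simpa using hp
      have hcml : Commute t (l.filter p).prod := by
        refine Commute.list_prod_right _ _ fun x hx => ?_
        have hx' := List.mem_filter.mp hx
        exact (hcomm x (mem_cons_of_mem _ hx'.1) t (mem_cons_self) hx'.2 hpf).symm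
      rw [List.prod_cons, filter_cons_of_neg (by simp [hpf]), filter_cons_of_pos (by simp [hpf]),
        List.prod_cons, ih', ← mul_assoc, hcml.eq, mul_assoc]

lemma swap_swap_eq {a y b : α} (hay : a ≠ y) (hyb : y ≠ b) (hab : a ≠ b) :
    Equiv.swap a b * Equiv.swap a y = Equiv.swap a y * Equiv.swap y b := by
  ext z
  simp only [Perm.mul_apply, swap_apply_def]
  split_ifs <;> simp_all

lemma formPerm_append_cons : ∀ (u : List α) (a b : α) (v : List α),
    Nodup ((a :: u) ++ (b :: v)) →
    formPerm ((a :: u) ++ (b :: v)) = Equiv.swap a b * formPerm (a :: u) * formPerm (b :: v) := by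
  intro u
  induction u with
  | nil =>
    intro a b v _
    simp [List.formPerm_cons_cons, List.formPerm_singleton]
  | cons y u ih =>
    intro a b v hnd
    have hnd' : Nodup ((y :: u) ++ (b :: v)) := (List.nodup_cons.mp hnd).2
    have hay : a ≠ y := by
      have := (List.nodup_cons.mp hnd).1; simp at this; tauto
    have hab : a ≠ b := by
      have := (List.nodup_cons.mp hnd).1; simp at this; tauto
    have hyb : y ≠ b := by
      have := (List.nodup_cons.mp hnd').1; simp at this; tauto
    have h1 : formPerm ((a :: y :: u) ++ (b :: v)) =
        Equiv.swap a y * formPerm ((y :: u) ++ (b :: v)) := by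
      simpa using List.formPerm_cons_cons a y (u ++ b :: v)
    rw [h1, ih y b v hnd', List.formPerm_cons_cons a y u,
      ← mul_assoc, ← mul_assoc, ← mul_assoc, ← swap_swap_eq hay hyb hab]

lemma exists_rep {c : Perm α} (hc : c.IsCycle) {a : α} (ha : c a ≠ a) :
    ∃ u : List α, (a :: u).Nodup ∧ (a :: u).toFinset = c.support ∧
      formPerm (a :: u) = c := by
  have hmem : a ∈ c.support := mem_support.mpr ha
  have hcyc : c.cycleOf a = c := hc.cycleOf_eq ha
  have hform : formPerm (c.toList a) = c := by rw [Equiv.Perm.formPerm_toList, hcyc]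
  have hlen : 2 ≤ (c.toList a).length := two_le_length_toList_iff_mem_support.mpr hmem
  obtain ⟨m, hm⟩ : ∃ m, (c.cycleOf a).support.card = m + 1 := by
    have := Equiv.Perm.length_toList c a
    refine ⟨(c.cycleOf a).support.card - 1, ?_⟩
    omega
  have hhead : c.toList a = a :: ((List.range m).map fun k => (c ^ (k + 1)) a) := by
    rw [Equiv.Perm.toList, hm, ← List.range_map_iterate, List.range_succ_eq_map]
    simp [List.map_map, Function.comp_def, Equiv.Perm.iterate_eq_pow]
  refine ⟨(List.range m).map fun k => (c ^ (k + 1)) a, ?_, ?_, ?_⟩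
  · rw [← hhead]; exact Equiv.Perm.nodup_toList c a
  · rw [← hhead]
    have hne : ∀ x : α, c.toList a ≠ [x] := Equiv.Perm.toList_ne_singleton c a
    rw [← List.support_formPerm_of_nodup _ (Equiv.Perm.nodup_toList c a) hne, hform]
  · rw [← hhead]; exact hform

lemma LemT : ∀ (N : ℕ) (l : List (Perm α)), l.length ≤ N → (∀ t ∈ l, t.IsSwap) →
    (∀ x ∈ Vtx l, ∀ y ∈ Vtx l, Rch l x y) → (Vtx l).card = l.length + 1 →
    l.prod.IsCycle ∧ l.prod.support = Vtx l := by
  intro N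
  induction N with
  | zero =>
    intro l hl _ _ hcard
    rw [List.length_eq_zero_iff.mp (Nat.le_zero.mp hl)] at hcard ⊢
    simp [Vtx] at hcard
  | succ N ih =>
    intro l hlen hswap hconn hcard
    match l, hlen, hswap, hconn, hcard with
    | [], _, _, _, hcard => simp [Vtx] at hcard
    | t :: l₂, hlen, hswap, hconn, hcard =>
      classical
      obtain ⟨a, b, hab, ht⟩ := hswap t (mem_cons_self)
      have hswap₂ : ∀ s ∈ l₂, IsSwap s := fun s hs => hswap s (mem_cons_of_mem _ hs)
      have hsuppt : t.support = {a, b} := by rw [ht, support_swap hab]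
      set A : Finset α := (Vtx (t :: l₂)).filter (fun x => Rch l₂ a x) with hA
      set B : Finset α := (Vtx (t :: l₂)).filter (fun x => Rch l₂ b x) with hB
      have haV : a ∈ Vtx (t :: l₂) :=
        mem_Vtx.mpr ⟨t, mem_cons_self, by rw [hsuppt]; exact Finset.mem_insert_self _ _⟩
      have hbV : b ∈ Vtx (t :: l₂) :=
        mem_Vtx.mpr ⟨t, mem_cons_self, by
          rw [hsuppt]; exact Finset.mem_insert_of_mem (Finset.mem_singleton_self _)⟩
      have haA : a ∈ A := Finset.mem_filter.mpr ⟨haV, ReflTransGen.refl⟩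
      have hbB : b ∈ B := Finset.mem_filter.mpr ⟨hbV, ReflTransGen.refl⟩
      -- disjointness of the two sides
      have hdisj : ∀ x, x ∈ A → x ∈ B → False := by
        intro x hxA hxB
        have hab2 : Rch l₂ a b :=
          ((Finset.mem_filter.mp hxA).2).trans (Rch_symm hswap₂ (Finset.mem_filter.mp hxB).2)
        have hcov : ∀ y ∈ Vtx (t :: l₂), ∃ r ∈ ({a} : Finset α), Rch l₂ r y := by
          intro y hy
          rcases Rch_cut (hconn a haV y hy) with h | ⟨_, ⟨z, hz, hzy⟩⟩
          · exact ⟨a, Finset.mem_singleton_self _, h⟩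
          · rw [hsuppt] at hz
            rcases Finset.mem_insert.mp hz with rfl | hz
            · exact ⟨z, Finset.mem_singleton_self _, hzy⟩
            · rw [Finset.mem_singleton.mp hz] at hzy
              exact ⟨a, Finset.mem_singleton_self _, hab2.trans hzy⟩
        have hle := LemC l₂ hswap₂ (Vtx (t :: l₂)) {a} hcov
        rw [hcard] at hle
        simp only [List.length_cons, Finset.card_singleton] at hle
        omega
      -- the two sides cover everything
      have hAB : ∀ x ∈ Vtx (t :: l₂), x ∈ A ∨ x ∈ B := by
        intro x hx
        rcases Rch_cut (hconn a haV x hx) with h | ⟨_, ⟨z, hz, hzx⟩⟩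
        · exact Or.inl (Finset.mem_filter.mpr ⟨hx, h⟩)
        · rw [hsuppt] at hz
          rcases Finset.mem_insert.mp hz with rfl | hz
          · exact Or.inl (Finset.mem_filter.mpr ⟨hx, hzx⟩)
          · rw [Finset.mem_singleton.mp hz] at hzx
            exact Or.inr (Finset.mem_filter.mpr ⟨hx, hzx⟩)
      have hunion : Vtx (t :: l₂) = A ∪ B := by
        ext x
        constructor
        · intro hx; exact Finset.mem_union.mpr (hAB x hx)
        · intro hx
          rcases Finset.mem_union.mp hx with h | h
          · exact (Finset.mem_filter.mp h).1
          · exact (Finset.mem_filter.mp h).1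
      -- every edge of l₂ lies in one side
      have hVsub : ∀ s ∈ l₂, s.support ⊆ Vtx (t :: l₂) := by
        intro s hs x hx
        exact mem_Vtx.mpr ⟨s, mem_cons_of_mem _ hs, hx⟩
      have hedge : ∀ s ∈ l₂, s.support ⊆ A ∨ s.support ⊆ B := by
        intro s hs
        obtain ⟨c, d, hcd, hsw⟩ := hswap₂ s hs
        have hsupp : s.support = {c, d} := by rw [hsw, support_swap hcd]
        have hcV : c ∈ Vtx (t :: l₂) := hVsub s hs (by rw [hsupp]; exact Finset.mem_insert_self _ _)
        have hdV : d ∈ Vtx (t :: l₂) := hVsub s hs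
          (by rw [hsupp]; exact Finset.mem_insert_of_mem (Finset.mem_singleton_self _))
        have hstep : Rch l₂ c d :=
          ReflTransGen.single ⟨s, hs, by rw [hsw, swap_apply_left]⟩
        rcases hAB c hcV with h | h
        · left
          have hdA : d ∈ A := Finset.mem_filter.mpr ⟨hdV, (Finset.mem_filter.mp h).2.trans hstep⟩
          rw [hsupp]
          intro z hz
          rcases Finset.mem_insert.mp hz with rfl | hz
          · exact h
          · rw [Finset.mem_singleton.mp hz]; exact hdA
        · right
          have hdB : d ∈ B := Finset.mem_filter.mpr ⟨hdV, (Finset.mem_filter.mp h).2.trans hstep⟩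
          rw [hsupp]
          intro z hz
          rcases Finset.mem_insert.mp hz with rfl | hz
          · exact h
          · rw [Finset.mem_singleton.mp hz]; exact hdB
      set la : List (Perm α) := l₂.filter (fun s => decide (s.support ⊆ A)) with hla
      set lb : List (Perm α) := l₂.filter (fun s => ! decide (s.support ⊆ A)) with hlb
      have hmem_la : ∀ s, s ∈ la ↔ s ∈ l₂ ∧ s.support ⊆ A := by
        intro s; rw [hla, List.mem_filter]; simp
      have hmem_lb : ∀ s, s ∈ lb → s ∈ l₂ ∧ s.support ⊆ B := by
        intro s hsl
        rw [hlb, List.mem_filter] at hsl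
        simp only [Bool.not_eq_true', decide_eq_false_iff_not] at hsl
        rcases hedge s hsl.1 with h | h
        · exact absurd h hsl.2
        · exact ⟨hsl.1, h⟩
      have hswapa : ∀ s ∈ la, IsSwap s := fun s hs => hswap₂ s ((hmem_la s).mp hs).1
      have hswapb : ∀ s ∈ lb, IsSwap s := fun s hs => hswap₂ s (hmem_lb s hs).1
      -- restriction of paths to sides
      have hres : ∀ x y, Rch l₂ x y → Rch l₂ a x → Rch la x y := by
        intro x y h hax
        induction h with
        | refl => exact ReflTransGen.refl
        | @tail c d hxc step ih =>
          obtain ⟨s, hs, rfl⟩ := step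
          by_cases h0 : s c = c
          · rw [h0]; exact ih
          · have hcmem : c ∈ s.support := mem_support.mpr h0
            have hcA : c ∈ A :=
              Finset.mem_filter.mpr ⟨hVsub s hs hcmem, hax.trans hxc⟩
            have hscA : s c ∈ A := Finset.mem_filter.mpr
              ⟨hVsub s hs (apply_mem_support.mpr hcmem), (hax.trans hxc).tail ⟨s, hs, rfl⟩⟩
            have hsupp : s.support = {c, s c} := swap_support_pair (hswap₂ s hs) hcmem
            have hsA : s.support ⊆ A := by
              rw [hsupp]
              intro z hz
              rcases Finset.mem_insert.mp hz with rfl | hz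
              · exact hcA
              · rw [Finset.mem_singleton.mp hz]; exact hscA
            exact ih.tail ⟨s, (hmem_la s).mpr ⟨hs, hsA⟩, rfl⟩
      have hresB : ∀ x y, Rch l₂ x y → Rch l₂ b x → Rch lb x y := by
        intro x y h hbx
        induction h with
        | refl => exact ReflTransGen.refl
        | @tail c d hxc step ih =>
          obtain ⟨s, hs, rfl⟩ := step
          by_cases h0 : s c = c
          · rw [h0]; exact ih
          · have hcmem : c ∈ s.support := mem_support.mpr h0
            have hcB : c ∈ B :=
              Finset.mem_filter.mpr ⟨hVsub s hs hcmem, hbx.trans hxc⟩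
            have hsB : s.support ⊆ B := by
              rcases hedge s hs with h | h
              · exact False.elim (hdisj c (h hcmem) hcB)
              · exact h
            have hsnotA : ¬ s.support ⊆ A := by
              intro hcon
              exact hdisj c (hcon hcmem) hcB
            exact ih.tail ⟨s, by rw [hlb, List.mem_filter]; simp [hs, hsnotA], rfl⟩
      have hAla : ∀ x ∈ A, Rch la a x := fun x hx =>
        hres a x (Finset.mem_filter.mp hx).2 ReflTransGen.refl
      have hBlb : ∀ x ∈ B, Rch lb b x := fun x hx =>
        hresB b x (Finset.mem_filter.mp hx).2 ReflTransGen.refl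
      -- counting
      have hcardA : A.card ≤ la.length + 1 := by
        have := LemC la hswapa A {a} (fun x hx => ⟨a, Finset.mem_singleton_self _, hAla x hx⟩)
        simpa using this
      have hcardB : B.card ≤ lb.length + 1 := by
        have := LemC lb hswapb B {b} (fun x hx => ⟨b, Finset.mem_singleton_self _, hBlb x hx⟩)
        simpa using this
      have hlensum : la.length + lb.length = l₂.length := by
        have := (List.filter_append_perm (fun s => decide (s.support ⊆ A)) l₂).length_eq
        rw [List.length_append] at this
        exact this
      have hABcard : A.card + B.card = l₂.length + 2 := by
        have hdisj' : Disjoint A B := Finset.disjoint_left.mpr (fun z h1 h2 => hdisj z h1 h2)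
        have := Finset.card_union_of_disjoint hdisj'
        rw [← hunion, hcard] at this
        simp only [List.length_cons] at this
        omega
      have hAcard : A.card = la.length + 1 := by omega
      have hBcard : B.card = lb.length + 1 := by omega
      -- vertex sets of the sides
      have hVlaA : Vtx la ⊆ A := by
        intro x hx
        obtain ⟨s, hs, hxs⟩ := mem_Vtx.mp hx
        exact ((hmem_la s).mp hs).2 hxs
      have hVlbB : Vtx lb ⊆ B := by
        intro x hx
        obtain ⟨s, hs, hxs⟩ := mem_Vtx.mp hx
        exact (hmem_lb s hs).2 hxs
      have hAsub : ∀ x ∈ A, x ≠ a → x ∈ Vtx la := by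
        intro x hx hxa
        obtain ⟨s, hs, hxs⟩ := mem_Vtx.mp (Finset.mem_filter.mp hx).1
        rcases List.mem_cons.mp hs with rfl | hs
        · rw [hsuppt] at hxs
          rcases Finset.mem_insert.mp hxs with rfl | hxs
          · exact absurd rfl hxa
          · rw [Finset.mem_singleton.mp hxs] at hx
            exact False.elim (hdisj b hx hbB)
        · rcases hedge s hs with h | h
          · exact mem_Vtx.mpr ⟨s, (hmem_la s).mpr ⟨hs, h⟩, hxs⟩
          · exact False.elim (hdisj x hx (h hxs))
      have hBsub : ∀ x ∈ B, x ≠ b → x ∈ Vtx lb := by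
        intro x hx hxb
        obtain ⟨s, hs, hxs⟩ := mem_Vtx.mp (Finset.mem_filter.mp hx).1
        rcases List.mem_cons.mp hs with rfl | hs
        · rw [hsuppt] at hxs
          rcases Finset.mem_insert.mp hxs with h' | hxs
          · rw [h'] at hx; exact False.elim (hdisj a haA hx)
          · exact absurd (Finset.mem_singleton.mp hxs) hxb
        · rcases hedge s hs with h | h
          · exact False.elim (hdisj x (h hxs) hx)
          · have hsnotA : ¬ s.support ⊆ A := fun hcon => hdisj x (hcon hxs) (h hxs)
            exact mem_Vtx.mpr ⟨s, by rw [hlb, List.mem_filter]; simp [hs, hsnotA], hxs⟩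
      -- representation of each side as a cycle list
      have hrepA : ∃ u, Nodup (a :: u) ∧ (a :: u).toFinset = A ∧ formPerm (a :: u) = la.prod := by
        by_cases hlanil : la = []
        · refine ⟨[], by simp, ?_, by simp [hlanil]⟩
          have hAone : A.card = 1 := by rw [hAcard, hlanil]; rfl
          obtain ⟨w, hw⟩ := Finset.card_eq_one.mp hAone
          rw [hw] at haA
          rw [hw, Finset.mem_singleton.mp haA]
          simp
        · have h2 : 1 < A.card := by
            have := List.length_pos_iff.mpr hlanil
            omega
          obtain ⟨x, hxA, hxa⟩ := Finset.exists_mem_ne h2 a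
          obtain ⟨s, hs, hsa⟩ := first_step (hAla x hxA) hxa
          have haVla : a ∈ Vtx la := mem_Vtx.mpr ⟨s, hs, mem_support.mpr hsa⟩
          have hVA : Vtx la = A := by
            apply Finset.Subset.antisymm hVlaA
            intro z hz
            by_cases hza : z = a
            · rw [hza]; exact haVla
            · exact hAsub z hz hza
          have hconn' : ∀ x ∈ Vtx la, ∀ y ∈ Vtx la, Rch la x y := by
            intro x hx y hy
            exact (Rch_symm hswapa (hAla x (hVA ▸ hx))).trans (hAla y (hVA ▸ hy))
          have hlen' : la.length ≤ N := by
            have h1 : la.length ≤ l₂.length := List.length_filter_le _ _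
            simp only [List.length_cons] at hlen
            omega
          obtain ⟨hcyc, hsupp⟩ := ih la hlen' hswapa hconn' (by rw [hVA]; exact hAcard)
          have ha' : la.prod a ≠ a := by
            rw [← mem_support, hsupp, hVA]; exact haA
          obtain ⟨u, h1, h2', h3⟩ := exists_rep hcyc ha'
          exact ⟨u, h1, by rw [h2', hsupp, hVA], h3⟩
      have hrepB : ∃ u, Nodup (b :: u) ∧ (b :: u).toFinset = B ∧ formPerm (b :: u) = lb.prod := by
        by_cases hlbnil : lb = []
        · refine ⟨[], by simp, ?_, by simp [hlbnil]⟩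
          have hBone : B.card = 1 := by rw [hBcard, hlbnil]; rfl
          obtain ⟨w, hw⟩ := Finset.card_eq_one.mp hBone
          rw [hw] at hbB
          rw [hw, Finset.mem_singleton.mp hbB]
          simp
        · have h2 : 1 < B.card := by
            have := List.length_pos_iff.mpr hlbnil
            omega
          obtain ⟨x, hxB, hxb⟩ := Finset.exists_mem_ne h2 b
          obtain ⟨s, hs, hsb⟩ := first_step (hBlb x hxB) hxb
          have hbVlb : b ∈ Vtx lb := mem_Vtx.mpr ⟨s, hs, mem_support.mpr hsb⟩
          have hVB : Vtx lb = B := by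
            apply Finset.Subset.antisymm hVlbB
            intro z hz
            by_cases hzb : z = b
            · rw [hzb]; exact hbVlb
            · exact hBsub z hz hzb
          have hconn' : ∀ x ∈ Vtx lb, ∀ y ∈ Vtx lb, Rch lb x y := by
            intro x hx y hy
            exact (Rch_symm hswapb (hBlb x (hVB ▸ hx))).trans (hBlb y (hVB ▸ hy))
          have hlen' : lb.length ≤ N := by
            have h1 : lb.length ≤ l₂.length := List.length_filter_le _ _
            simp only [List.length_cons] at hlen
            omega
          obtain ⟨hcyc, hsupp⟩ := ih lb hlen' hswapb hconn' (by rw [hVB]; exact hBcard)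
          have hb' : lb.prod b ≠ b := by
            rw [← mem_support, hsupp, hVB]; exact hbB
          obtain ⟨u, h1, h2', h3⟩ := exists_rep hcyc hb'
          exact ⟨u, h1, by rw [h2', hsupp, hVB], h3⟩
      obtain ⟨ua, hnda, hfa, hpa⟩ := hrepA
      obtain ⟨ub, hndb, hfb, hpb⟩ := hrepB
      -- assembling the product
      have hcomm : ∀ x ∈ l₂, ∀ y ∈ l₂, (fun s => decide (s.support ⊆ A)) x = true →
          (fun s => decide (s.support ⊆ A)) y = false → Commute x y := by
        intro x hx y hy hxp hyp
        simp only [decide_eq_true_eq, decide_eq_false_iff_not] at hxp hyp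
        have hyB : y.support ⊆ B := by
          rcases hedge y hy with h | h
          · exact absurd h hyp
          · exact h
        refine Equiv.Perm.Disjoint.commute ?_
        intro z
        by_cases hzx : x z = z
        · exact Or.inl hzx
        · have hz : z ∈ x.support := mem_support.mpr hzx
          right
          by_contra hzy
          exact hdisj z (hxp hz) (hyB (mem_support.mpr hzy))
      have hsplit : l₂.prod = la.prod * lb.prod := split_prod l₂ _ hcomm
      have hprod : (t :: l₂).prod = Equiv.swap a b * formPerm (a :: ua) * formPerm (b :: ub) := by
        rw [List.prod_cons, hsplit, hpa, hpb, ht, mul_assoc]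
      have hnd : Nodup ((a :: ua) ++ (b :: ub)) := by
        refine List.Nodup.append hnda hndb ?_
        intro z hz1 hz2
        have hzA : z ∈ A := by rw [← hfa]; exact List.mem_toFinset.mpr hz1
        have hzB : z ∈ B := by rw [← hfb]; exact List.mem_toFinset.mpr hz2
        exact hdisj z hzA hzB
      have hform : (t :: l₂).prod = formPerm ((a :: ua) ++ (b :: ub)) := by
        rw [hprod, formPerm_append_cons ua a b ub hnd]
      have hlen2 : 2 ≤ ((a :: ua) ++ (b :: ub)).length := by
        simp only [List.length_append, List.length_cons]
        omega
      constructor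
      · rw [hform]; exact List.isCycle_formPerm hnd hlen2
      · rw [hform, List.support_formPerm_of_nodup _ hnd (fun x hx => by simp at hx)]
        rw [List.toFinset_append]
        simp only [List.toFinset_cons] at *
        rw [hfa, hfb, hunion]

lemma fwd (l : List (Perm α)) (hswap : ∀ t ∈ l, t.IsSwap) (hc : l.prod.IsCycle)
    (hcard : l.prod.support.card = l.length + 1) :
    Vtx l = l.prod.support ∧ (∀ x ∈ Vtx l, ∀ y ∈ Vtx l, Rch l x y) := by
  classical
  have hsub : l.prod.support ⊆ Vtx l := support_prod_subset l
  obtain ⟨x₀, hx₀⟩ : l.prod.support.Nonempty := Finset.card_pos.mp (by omega)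
  have hreach : ∀ y ∈ l.prod.support, Rch l x₀ y := by
    intro y hy
    have hsc : l.prod.SameCycle x₀ y := hc.sameCycle (mem_support.mp hx₀) (mem_support.mp hy)
    obtain ⟨i, _, hi⟩ := hsc.exists_pow_eq'
    rw [← hi]
    exact Rch_pow l x₀ i
  set S : Finset α := Finset.univ.filter (fun x => Rch l x₀ x) with hS
  have hsubS : l.prod.support ⊆ S := fun y hy =>
    Finset.mem_filter.mpr ⟨Finset.mem_univ _, hreach y hy⟩
  have hScard : S.card ≤ l.length + 1 := by
    have := LemC l hswap S {x₀}
      (fun x hx => ⟨x₀, Finset.mem_singleton_self _, (Finset.mem_filter.mp hx).2⟩)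
    simpa using this
  have hSeq : l.prod.support = S :=
    Finset.eq_of_subset_of_card_le hsubS (by omega)
  have hedge : ∀ s ∈ l, ∀ u ∈ s.support, u ∈ S := by
    intro s hs u hu
    by_contra huS
    set C : Finset α := Finset.univ.filter (fun x => Rch l u x) with hC
    have hdisjCS : ∀ z, z ∈ C → z ∈ S → False := by
      intro z hz1 hz2
      exact huS (Finset.mem_filter.mpr ⟨Finset.mem_univ _,
        (Finset.mem_filter.mp hz2).2.trans (Rch_symm hswap (Finset.mem_filter.mp hz1).2)⟩)
    have hsu : s u ≠ u := mem_support.mp hu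
    have huC : u ∈ C := Finset.mem_filter.mpr ⟨Finset.mem_univ _, ReflTransGen.refl⟩
    have hsuC : s u ∈ C := Finset.mem_filter.mpr
      ⟨Finset.mem_univ _, ReflTransGen.single ⟨s, hs, rfl⟩⟩
    have hCcard : 2 ≤ C.card := by
      have hpair : ({u, s u} : Finset α) ⊆ C := by
        intro z hz
        rcases Finset.mem_insert.mp hz with rfl | hz
        · exact huC
        · rw [Finset.mem_singleton.mp hz]; exact hsuC
      have := Finset.card_le_card hpair
      rwa [Finset.card_pair (Ne.symm hsu)] at this
    have hx₀S : x₀ ∈ S := hsubS hx₀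
    have hx₀u : x₀ ≠ u := fun h => huS (h ▸ hx₀S)
    have hcov : ∀ x ∈ S ∪ C, ∃ r ∈ ({x₀, u} : Finset α), Rch l r x := by
      intro x hx
      rcases Finset.mem_union.mp hx with h | h
      · exact ⟨x₀, Finset.mem_insert_self _ _, (Finset.mem_filter.mp h).2⟩
      · exact ⟨u, Finset.mem_insert_of_mem (Finset.mem_singleton_self _),
          (Finset.mem_filter.mp h).2⟩
    have hle := LemC l hswap (S ∪ C) {x₀, u} hcov
    have hCS : Disjoint S C := Finset.disjoint_left.mpr (fun z h1 h2 => hdisjCS z h2 h1)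
    rw [Finset.card_union_of_disjoint hCS, Finset.card_pair hx₀u] at hle
    have hScard' : S.card = l.length + 1 := by rw [← hSeq, hcard]
    omega
  have hVS : Vtx l = l.prod.support := by
    rw [hSeq]
    apply Finset.Subset.antisymm
    · intro x hx
      obtain ⟨s, hs, hxs⟩ := mem_Vtx.mp hx
      exact hedge s hs x hxs
    · rw [← hSeq]; exact hsub
  refine ⟨hVS, ?_⟩
  intro x hx y hy
  rw [hVS, hSeq] at hx hy
  exact (Rch_symm hswap (Finset.mem_filter.mp hx).2).trans (Finset.mem_filter.mp hy).2

theorem reordered_transposition_product_is_cycle (n k : ℕ)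
    (σ : Fin k → Equiv.Perm (Fin n)) (hswap : ∀ i, (σ i).IsSwap)
    (hc : ((List.ofFn σ).reverse.prod).IsCycle)
    (hcard : ((List.ofFn σ).reverse.prod).support.card = k + 1) :
    ∀ η : Equiv.Perm (Fin k),
      ((List.ofFn (σ ∘ η)).reverse.prod).IsCycle ∧
      ((List.ofFn (σ ∘ η)).reverse.prod).support =
        ((List.ofFn σ).reverse.prod).support := by
  classical
  intro η
  set l : List (Perm (Fin n)) := (List.ofFn σ).reverse with hl
  set l' : List (Perm (Fin n)) := (List.ofFn (σ ∘ η)).reverse with hl'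
  have hswapl : ∀ t ∈ l, t.IsSwap := by
    intro t ht
    rw [hl, List.mem_reverse, List.mem_ofFn] at ht
    obtain ⟨i, rfl⟩ := ht
    exact hswap i
  have hlen : l.length = k := by simp [hl]
  have hlen' : l'.length = k := by simp [hl']
  have hperm : l' ~ l := by
    refine (List.reverse_perm _).trans (Perm.trans ?_ (List.reverse_perm _).symm)
    rw [List.ofFn_eq_map, List.ofFn_eq_map, ← List.map_map]
    refine List.Perm.map _ ?_
    refine List.perm_of_nodup_nodup_toFinset_eq ?_ (List.nodup_finRange k) ?_
    · exact (List.nodup_finRange k).map η.injective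
    · ext x
      simp only [List.mem_toFinset, List.mem_map, List.mem_finRange, true_and, iff_true]
      exact ⟨η.symm x, Equiv.apply_symm_apply η x⟩
  have hswapl' : ∀ t ∈ l', t.IsSwap := fun t ht => hswapl t (hperm.subset ht)
  have hcard2 : l.prod.support.card = l.length + 1 := by rw [hlen]; exact hcard
  obtain ⟨hVS, hconn⟩ := fwd l hswapl hc hcard2
  have hVeq : Vtx l' = Vtx l := by
    ext x
    simp only [mem_Vtx]
    constructor
    · rintro ⟨t, ht, hx⟩; exact ⟨t, hperm.subset ht, hx⟩
    · rintro ⟨t, ht, hx⟩; exact ⟨t, hperm.symm.subset ht, hx⟩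
  have hconn' : ∀ x ∈ Vtx l', ∀ y ∈ Vtx l', Rch l' x y := by
    intro x hx y hy
    rw [hVeq] at hx hy
    exact Rch_mono (fun t ht => hperm.symm.subset ht) (hconn x hx y hy)
  have hcV : (Vtx l').card = l'.length + 1 := by
    rw [hVeq, hVS, hlen', hcard]
  obtain ⟨h1, h2⟩ := LemT l'.length l' le_rfl hswapl' hconn' hcV
  exact ⟨h1, by rw [h2, hVeq, hVS]⟩
end

section
/- For pairwise distinct indices i, j, k ∈ {1,…,N}, the following commutator identities hold: [A_{ij}, A_{jk}] = [A_{jk}, A_{ik}] = [A_{ik}, A_{ij}] = B_{ijk}, and [A_{ij}, B_{ijk}] = 2(A_{jk} − A_{ik}), [A_{jk}, B_{ijk}] = 2(A_{ik} − A_{ij}), [A_{ik}, B_{ijk}] = 2(A_{ij} − A_{jk}). -/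
/-- `A i j = E i j + E j i - E i i - E j j`. -/
noncomputable def Amat (N : ℕ) (i j : Fin N) : Matrix (Fin N) (Fin N) ℝ :=
  Matrix.single i j 1 + Matrix.single j i 1 -
    Matrix.single i i 1 - Matrix.single j j 1

/-- `B i j k = (E i k - E k i) - (E i j - E j i) - (E j k - E k j)`. -/
noncomputable def Bmat (N : ℕ) (i j k : Fin N) : Matrix (Fin N) (Fin N) ℝ :=
  (Matrix.single i k 1 - Matrix.single k i 1) -
    (Matrix.single i j 1 - Matrix.single j i 1) -
    (Matrix.single j k 1 - Matrix.single k j 1)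

lemma Emul {N : ℕ} (i j k l : Fin N) :
    Matrix.single i j (1:ℝ) * Matrix.single k l 1 =
      if j = k then Matrix.single i l 1 else 0 := by
  split
  · subst ‹j = k›; simpa using Matrix.single_mul_single_same (i := i) (j := j) (c := (1:ℝ)) l 1
  · exact Matrix.single_mul_single_of_ne (i := i) (j := j) (c := (1:ℝ)) (k := k) ‹j ≠ k› 1

theorem Amat_bracket_identities (N : ℕ) (i j k : Fin N)
    (hij : i ≠ j) (hik : i ≠ k) (hjk : j ≠ k) :
    ⁅Amat N i j, Amat N j k⁆ = Bmat N i j k ∧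
    ⁅Amat N j k, Amat N i k⁆ = Bmat N i j k ∧
    ⁅Amat N i k, Amat N i j⁆ = Bmat N i j k ∧
    ⁅Amat N i j, Bmat N i j k⁆ = 2 • (Amat N j k - Amat N i k) ∧
    ⁅Amat N j k, Bmat N i j k⁆ = 2 • (Amat N i k - Amat N i j) ∧
    ⁅Amat N i k, Bmat N i j k⁆ = 2 • (Amat N i j - Amat N j k) := by
  have h1 := hij; have h2 := hik; have h3 := hjk
  have h1' := hij.symm; have h2' := hik.symm; have h3' := hjk.symm
  refine ⟨?_, ?_, ?_, ?_, ?_, ?_⟩ <;>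
  · simp only [Amat, Bmat, Ring.lie_def, sub_mul, mul_sub, add_mul, mul_add, Emul,
      if_pos rfl, if_neg h1, if_neg h2, if_neg h3, if_neg h1', if_neg h2', if_neg h3',
      if_true, two_smul, smul_sub]
    abel
end
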